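/- Let T > 0, let y₀¹, y₀² ∈ (0, F₁(1)), let w¹, w² : [0,T] → ℝ with w¹₀ = w²₀ = 0, and for i = 1,2 let yⁱ : [0,T] → (0, F₁(1)) be a continuous solution of yⁱ_t = y₀ⁱ + ∫₀^t (G ∘ F₁⁻¹)(yⁱ_s) ds + γθ^β wⁱ_t. Then sup_{t∈[0,T]} |y¹_t - y²_t| ≤ |y₀¹ - y₀²| + 2γθ^β sup_{t∈[0,T]} |w¹_t - w²_t|. -/

import Mathlib

/- Fix α ∈ (0,1], β ∈ (1-α,1), θ > 0, μ ∈ (0,1), γ ≥ 0.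
F₁(y) = ∫₀^y [v(1-v)]^{-β} dv is a strictly increasing bijection from [0,1]
onto [0,F₁(1)] with inverse F₁⁻¹ (realized via `Function.invFunOn`), and
G(y) := θ(μ-y)[y(1-y)]^{-β}.
STATEMENT 10: Let T > 0, y₀¹, y₀² ∈ (0,F₁(1)), w¹, w² : [0,T] → ℝ continuous
with w¹₀ = w²₀ = 0, and for i = 1,2 let yⁱ : [0,T] → (0,F₁(1)) be a continuous
solution of yⁱ_t = y₀ⁱ + ∫₀^t (G ∘ F₁⁻¹)(yⁱ_s) ds + γθ^β wⁱ_t. Then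
sup_{t∈[0,T]} |y¹_t - y²_t| ≤ |y₀¹ - y₀²| + 2γθ^β sup_{t∈[0,T]} |w¹_t - w²_t|. -/

noncomputable def F1 (β y : ℝ) : ℝ := ∫ v in (0:ℝ)..y, (v * (1 - v)) ^ (-β)

noncomputable def F1inv (β z : ℝ) : ℝ := Function.invFunOn (F1 β) (Set.Icc 0 1) z

noncomputable def G (β θ μ x : ℝ) : ℝ := θ * (μ - x) * (x * (1 - x)) ^ (-β)


open Set MeasureTheory intervalIntegral

-- L1: integrability of the integrand on [0,1]
lemma integrand_int {β : ℝ} (hβ0 : 0 < β) (hβ1 : β < 1) :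
    IntervalIntegrable (fun v : ℝ => (v * (1 - v)) ^ (-β)) volume 0 1 := by
  have hg1 : IntervalIntegrable (fun v : ℝ => (2:ℝ)^β * v ^ (-β)) volume 0 1 :=
    (intervalIntegrable_rpow' (by linarith)).const_mul _
  have hg2 : IntervalIntegrable (fun v : ℝ => (2:ℝ)^β * (1 - v) ^ (-β)) volume 0 1 := by
    have := (intervalIntegrable_rpow' (r := -β) (by linarith) (a := 0) (b := 1)).comp_sub_left 1
    simpa using (this.const_mul ((2:ℝ)^β)).symm
  have hg := hg1.add hg2
  rw [intervalIntegrable_iff, uIoc_of_le (by norm_num : (0:ℝ) ≤ 1)] at *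
  apply Integrable.mono' hg
  · exact ((measurable_id.mul (measurable_const.sub measurable_id)).pow
      measurable_const).aestronglyMeasurable
  · refine (ae_restrict_iff' measurableSet_Ioc).mpr (Filter.Eventually.of_forall ?_)
    intro v hv
    rcases eq_or_lt_of_le hv.2 with h1 | h1
    · rw [h1]
      simp only [sub_self, mul_zero, Real.zero_rpow (neg_ne_zero.mpr hβ0.ne')]
      rw [norm_zero]
      positivity
    · have hv0 : 0 < v := hv.1
      have hv1 : v < 1 := h1
      have h1v : 0 < 1 - v := by linarith
      rw [Real.norm_of_nonneg (Real.rpow_nonneg (by nlinarith) _)]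
      rw [Real.mul_rpow hv0.le h1v.le]
      rcases le_total v (1/2) with hc | hc
      · have hb : (1 - v) ^ (-β) ≤ (2:ℝ)^β := by
          have : ((2:ℝ)⁻¹) ^ (-β) = (2:ℝ)^β := by
            rw [Real.inv_rpow (by norm_num), Real.rpow_neg (by norm_num)]
            simp [Real.rpow_neg]
          rw [← this]
          exact Real.rpow_le_rpow_of_nonpos (by norm_num) (by linarith) (by linarith)
        have h2 : v ^ (-β) * (1 - v) ^ (-β) ≤ (2:ℝ)^β * v ^ (-β) := by
          rw [mul_comm ((2:ℝ)^β)]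
          exact mul_le_mul_of_nonneg_left hb (Real.rpow_nonneg hv0.le _)
        have h3 : (0:ℝ) ≤ (2:ℝ)^β * (1 - v) ^ (-β) := by positivity
        linarith
      · have hb : v ^ (-β) ≤ (2:ℝ)^β := by
          have : ((2:ℝ)⁻¹) ^ (-β) = (2:ℝ)^β := by
            rw [Real.inv_rpow (by norm_num), Real.rpow_neg (by norm_num)]
            simp [Real.rpow_neg]
          rw [← this]
          exact Real.rpow_le_rpow_of_nonpos (by norm_num) (by linarith) (by linarith)
        have h2 : v ^ (-β) * (1 - v) ^ (-β) ≤ (2:ℝ)^β * (1 - v) ^ (-β) :=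
          mul_le_mul_of_nonneg_right hb (Real.rpow_nonneg h1v.le _)
        have h3 : (0:ℝ) ≤ (2:ℝ)^β * v ^ (-β) := by positivity
        linarith



lemma integrand_int' {β : ℝ} (hβ0 : 0 < β) (hβ1 : β < 1) {a b : ℝ}
    (ha : a ∈ Icc (0:ℝ) 1) (hb : b ∈ Icc (0:ℝ) 1) :
    IntervalIntegrable (fun v : ℝ => (v * (1 - v)) ^ (-β)) volume a b :=
  (integrand_int hβ0 hβ1).mono_set (by
    rw [uIcc_of_le (by norm_num : (0:ℝ) ≤ 1)]
    exact uIcc_subset_Icc ha hb)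

lemma F1_zero (β : ℝ) : F1 β 0 = 0 := integral_same

lemma F1_strictMonoOn {β : ℝ} (hβ0 : 0 < β) (hβ1 : β < 1) :
    StrictMonoOn (F1 β) (Icc 0 1) := by
  intro x hx y hy hxy
  have hint1 := integrand_int' hβ0 hβ1 (left_mem_Icc.mpr (by norm_num)) hx
  have hint2 := integrand_int' hβ0 hβ1 hx hy
  have hadd : F1 β x + (∫ v in x..y, (v * (1 - v)) ^ (-β)) = F1 β y :=
    integral_add_adjacent_intervals hint1 hint2
  have hpos : 0 < ∫ v in x..y, (v * (1 - v)) ^ (-β) := by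
    apply intervalIntegral_pos_of_pos_on hint2 _ hxy
    intro v hv
    have h0 : 0 < v := lt_of_le_of_lt hx.1 hv.1
    have h1 : v < 1 := lt_of_lt_of_le hv.2 hy.2
    exact Real.rpow_pos_of_pos (by nlinarith) _
  simp only [F1] at *
  linarith

lemma F1_contOn {β : ℝ} (hβ0 : 0 < β) (hβ1 : β < 1) :
    ContinuousOn (F1 β) (Icc 0 1) := by
  have h := intervalIntegral.continuousOn_primitive_interval
    (a := 0) (b := 1) (f := fun v : ℝ => (v * (1 - v)) ^ (-β)) (μ := volume) ?_
  · exact (by simpa [uIcc_of_le (by norm_num : (0:ℝ) ≤ 1)] using h :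
      ContinuousOn (fun x => ∫ (t : ℝ) in (0:ℝ)..x, (t * (1 - t)) ^ (-β)) (Icc 0 1))
  · rw [uIcc_of_le (by norm_num : (0:ℝ) ≤ 1)]
    rw [← intervalIntegrable_iff_integrableOn_Icc_of_le (by norm_num : (0:ℝ) ≤ 1)]
    exact integrand_int hβ0 hβ1

lemma F1_surj {β : ℝ} (hβ0 : 0 < β) (hβ1 : β < 1) {z : ℝ}
    (hz : z ∈ Icc 0 (F1 β 1)) : ∃ x ∈ Icc (0:ℝ) 1, F1 β x = z := by
  have := intermediate_value_Icc (by norm_num : (0:ℝ) ≤ 1) (F1_contOn hβ0 hβ1)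
  rw [F1_zero] at this
  obtain ⟨x, hx, hfx⟩ := this hz
  exact ⟨x, hx, hfx⟩

lemma F1inv_mem {β : ℝ} (hβ0 : 0 < β) (hβ1 : β < 1) {z : ℝ}
    (hz : z ∈ Icc 0 (F1 β 1)) : F1inv β z ∈ Icc (0:ℝ) 1 := by
  obtain ⟨x, hx, hfx⟩ := F1_surj hβ0 hβ1 hz
  exact Function.invFunOn_mem ⟨x, hx, hfx⟩

lemma F1_F1inv {β : ℝ} (hβ0 : 0 < β) (hβ1 : β < 1) {z : ℝ}
    (hz : z ∈ Icc 0 (F1 β 1)) : F1 β (F1inv β z) = z := by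
  obtain ⟨x, hx, hfx⟩ := F1_surj hβ0 hβ1 hz
  exact Function.invFunOn_eq ⟨x, hx, hfx⟩

lemma F1inv_mono {β : ℝ} (hβ0 : 0 < β) (hβ1 : β < 1) {z1 z2 : ℝ}
    (h1 : z1 ∈ Icc 0 (F1 β 1)) (h2 : z2 ∈ Icc 0 (F1 β 1)) (h : z1 ≤ z2) :
    F1inv β z1 ≤ F1inv β z2 := by
  by_contra hcon
  push_neg at hcon
  have := F1_strictMonoOn hβ0 hβ1 (F1inv_mem hβ0 hβ1 h2) (F1inv_mem hβ0 hβ1 h1) hcon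
  rw [F1_F1inv hβ0 hβ1 h1, F1_F1inv hβ0 hβ1 h2] at this
  linarith

lemma F1inv_mem_Ioo {β : ℝ} (hβ0 : 0 < β) (hβ1 : β < 1) {z : ℝ}
    (hz : z ∈ Ioo 0 (F1 β 1)) : F1inv β z ∈ Ioo (0:ℝ) 1 := by
  have hz' : z ∈ Icc 0 (F1 β 1) := ⟨hz.1.le, hz.2.le⟩
  have hm := F1inv_mem hβ0 hβ1 hz'
  constructor
  · rcases eq_or_lt_of_le hm.1 with h | h
    · exfalso
      have := F1_F1inv hβ0 hβ1 hz'
      rw [← h, F1_zero] at this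
      exact hz.1.ne this
    · exact h
  · rcases eq_or_lt_of_le hm.2 with h | h
    · exfalso
      have := F1_F1inv hβ0 hβ1 hz'
      rw [h] at this
      exact hz.2.ne this.symm
    · exact h


lemma key_ineq {β μ x : ℝ} (hβ0 : 0 < β) (hβ1 : β < 1) (hμ0 : 0 < μ) (hμ1 : μ < 1)
    (hx0 : 0 < x) (hx1 : x < 1) : β * ((x - μ) * (1 - 2*x)) ≤ x * (1 - x) := by
  rcases le_total ((x - μ) * (1 - 2*x)) 0 with h | h
  · nlinarith
  · rcases le_total x (1/2) with hc | hc
    · nlinarith [mul_le_mul_of_nonneg_right hβ1.le h]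
    · nlinarith [mul_le_mul_of_nonneg_right hβ1.le h]

lemma G_hasDeriv {β θ μ x : ℝ} (hx0 : 0 < x) (hx1 : x < 1) :
    HasDerivAt (G β θ μ)
      ((-θ) * (x * (1-x)) ^ (-β) +
        θ * (μ - x) * ((-β) * (x * (1-x)) ^ (-β - 1) * (1 - 2*x))) x := by
  have h1 : HasDerivAt (fun x : ℝ => θ * (μ - x)) (-θ) x := by
    simpa using (((hasDerivAt_id x).const_sub μ).const_mul θ)
  have h2 : HasDerivAt (fun x : ℝ => x * (1 - x)) (1 - 2*x) x := by
    have := (hasDerivAt_id x).mul ((hasDerivAt_id x).const_sub 1)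
    simp only [id_eq] at this
    exact HasDerivAt.congr_deriv this (by simp; ring)
  have h3 : HasDerivAt (fun x : ℝ => (x * (1 - x)) ^ (-β))
      ((-β) * (x * (1-x)) ^ (-β - 1) * (1 - 2*x)) x := by
    have hne : x * (1 - x) ≠ 0 := by nlinarith
    have h := (Real.hasDerivAt_rpow_const (p := -β) (Or.inl hne)).comp x h2; exact h.congr_deriv (by ring)
  exact h1.mul h3

lemma G_antitoneOn {β θ μ : ℝ} (hβ0 : 0 < β) (hβ1 : β < 1) (hθ : 0 < θ)
    (hμ0 : 0 < μ) (hμ1 : μ < 1) : AntitoneOn (G β θ μ) (Ioo 0 1) := by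
  have hderiv : ∀ x ∈ Ioo (0:ℝ) 1, deriv (G β θ μ) x ≤ 0 := by
    intro x hx
    have hd := G_hasDeriv (β := β) (θ := θ) (μ := μ) hx.1 hx.2
    rw [hd.deriv]
    have hP : 0 < x * (1 - x) := by nlinarith [hx.1, hx.2]
    have hsplit : (x * (1-x)) ^ (-β) = (x * (1-x)) ^ (-β - 1) * (x * (1-x)) := by
      nth_rewrite 3 [← Real.rpow_one (x * (1-x))]
      rw [← Real.rpow_add hP]
      norm_num
    rw [hsplit]
    have hkey := key_ineq hβ0 hβ1 hμ0 hμ1 hx.1 hx.2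
    have hPp : 0 < (x * (1-x)) ^ (-β - 1) := Real.rpow_pos_of_pos hP _
    have : (-θ) * ((x * (1-x)) ^ (-β - 1) * (x * (1-x))) +
        θ * (μ - x) * ((-β) * (x * (1-x)) ^ (-β - 1) * (1 - 2*x)) =
        θ * (x * (1-x)) ^ (-β - 1) * (β * ((x - μ) * (1 - 2*x)) - x * (1-x)) := by ring
    rw [this]
    have h1 : β * ((x - μ) * (1 - 2*x)) - x * (1-x) ≤ 0 := by linarith
    have h2 : 0 ≤ θ * (x * (1-x)) ^ (-β - 1) := by positivity
    exact mul_nonpos_of_nonneg_of_nonpos h2 h1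
  apply antitoneOn_of_deriv_nonpos (convex_Ioo 0 1)
  · intro x hx
    exact (G_hasDeriv hx.1 hx.2).continuousAt.continuousWithinAt
  · intro x hx
    rw [interior_Ioo] at hx
    exact (G_hasDeriv hx.1 hx.2).differentiableAt.differentiableWithinAt
  · intro x hx
    rw [interior_Ioo] at hx
    exact hderiv x hx



lemma G_measurable (β θ μ : ℝ) : Measurable (G β θ μ) := by
  apply Measurable.mul
  · exact (measurable_const.sub measurable_id).const_mul θ
  · exact (measurable_id.mul (measurable_const.sub measurable_id)).pow measurable_const

lemma G_contOn {β θ μ : ℝ} {s : Set ℝ} (hs : s ⊆ Ioo 0 1) :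
    ContinuousOn (G β θ μ) s := by
  intro x hx
  obtain ⟨hx0, hx1⟩ := hs hx
  have hne : x * (1 - x) ≠ 0 := by nlinarith
  apply ContinuousAt.continuousWithinAt
  apply ContinuousAt.mul
  · exact (continuous_const.mul (continuous_const.sub continuous_id)).continuousAt
  · exact ContinuousAt.rpow_const
      ((continuous_id.mul (continuous_const.sub continuous_id)).continuousAt) (Or.inl hne)

lemma sol_integrable {β θ μ T : ℝ} (hβ0 : 0 < β) (hβ1 : β < 1) (hT : 0 < T)
    {y : ℝ → ℝ} (hyc : ContinuousOn y (Icc 0 T))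
    (hym : ∀ t ∈ Icc (0:ℝ) T, y t ∈ Ioo 0 (F1 β 1))
    {u v : ℝ} (hu : u ∈ Icc (0:ℝ) T) (hv : v ∈ Icc (0:ℝ) T) :
    IntervalIntegrable (fun s => G β θ μ (F1inv β (y s))) volume u v := by
  have hK : IsCompact (y '' Icc 0 T) := isCompact_Icc.image_of_continuousOn hyc
  have hne : (y '' Icc 0 T).Nonempty := ⟨y 0, mem_image_of_mem _ ⟨le_refl 0, hT.le⟩⟩
  set a := sInf (y '' Icc 0 T) with ha_def
  set b := sSup (y '' Icc 0 T) with hb_def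
  have haK : a ∈ y '' Icc 0 T := hK.sInf_mem hne
  have hbK : b ∈ y '' Icc 0 T := hK.sSup_mem hne
  have haIoo : a ∈ Ioo 0 (F1 β 1) := by
    obtain ⟨t, ht, hyt⟩ := haK; rw [← hyt]; exact hym t ht
  have hbIoo : b ∈ Ioo 0 (F1 β 1) := by
    obtain ⟨t, ht, hyt⟩ := hbK; rw [← hyt]; exact hym t ht
  have hab : a ≤ b := csInf_le_csSup hne hK.bddBelow hK.bddAbove
  have hbnd : ∀ s ∈ Icc (0:ℝ) T, a ≤ y s ∧ y s ≤ b := fun s hs =>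
    ⟨csInf_le hK.bddBelow (mem_image_of_mem _ hs),
     le_csSup hK.bddAbove (mem_image_of_mem _ hs)⟩
  set g : ℝ → ℝ := fun z => F1inv β (min b (max a z)) with hg_def
  have hclamp_mem : ∀ z : ℝ, min b (max a z) ∈ Icc 0 (F1 β 1) := by
    intro z
    constructor
    · exact le_min hbIoo.1.le (le_trans haIoo.1.le (le_max_left _ _))
    · exact le_trans (min_le_left _ _) hbIoo.2.le
  have hg_mono : Monotone g := by
    intro z z' hzz
    exact F1inv_mono hβ0 hβ1 (hclamp_mem z) (hclamp_mem z')
      (min_le_min le_rfl (max_le_max le_rfl hzz))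
  have heq : ∀ s ∈ Icc (0:ℝ) T, g (y s) = F1inv β (y s) := by
    intro s hs
    have := hbnd s hs
    simp only [hg_def, max_eq_right this.1, min_eq_right this.2]
  set xa := F1inv β a with hxa_def
  set xb := F1inv β b with hxb_def
  have hxa : xa ∈ Ioo (0:ℝ) 1 := F1inv_mem_Ioo hβ0 hβ1 haIoo
  have hxb : xb ∈ Ioo (0:ℝ) 1 := F1inv_mem_Ioo hβ0 hβ1 hbIoo
  have hgx : ∀ z : ℝ, g z ∈ Icc xa xb := by
    intro z
    constructor
    · exact F1inv_mono hβ0 hβ1 ⟨haIoo.1.le, haIoo.2.le⟩ (hclamp_mem z)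
        (le_min hab (le_max_left _ _))
    · exact F1inv_mono hβ0 hβ1 (hclamp_mem z) ⟨hbIoo.1.le, hbIoo.2.le⟩
        (min_le_left _ _)
  have hGc : ContinuousOn (G β θ μ) (Icc xa xb) :=
    G_contOn (fun x hx => ⟨lt_of_lt_of_le hxa.1 hx.1, lt_of_le_of_lt hx.2 hxb.2⟩)
  obtain ⟨C, hC⟩ := isCompact_Icc.exists_bound_of_continuousOn hGc
  have hsub : uIoc u v ⊆ Icc (0:ℝ) T :=
    (Ioc_subset_Icc_self).trans (uIcc_subset_Icc hu hv)
  rw [intervalIntegrable_iff]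
  haveI : IsFiniteMeasure (volume.restrict (uIoc u v)) := by
    constructor
    rw [Measure.restrict_apply_univ]
    exact measure_Ioc_lt_top
  apply Integrable.mono' (integrable_const C)
  · have hy_ae : AEMeasurable y (volume.restrict (uIoc u v)) :=
      (hyc.aemeasurable measurableSet_Icc).mono_measure
        (Measure.restrict_mono hsub le_rfl)
    have h1 : AEMeasurable (fun s => G β θ μ (g (y s))) (volume.restrict (uIoc u v)) :=
      (G_measurable β θ μ).comp_aemeasurable (hg_mono.measurable.comp_aemeasurable hy_ae)
    apply AEStronglyMeasurable.congr h1.aestronglyMeasurable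
    refine (ae_restrict_iff' measurableSet_uIoc).mpr (Filter.Eventually.of_forall ?_)
    intro s hs
    simp only [heq s (hsub hs)]
  · refine (ae_restrict_iff' measurableSet_uIoc).mpr (Filter.Eventually.of_forall ?_)
    intro s hs
    rw [← heq s (hsub hs)]
    exact hC _ (hgx (y s))



lemma one_side (β θ μ γ T : ℝ) (hβ0 : 0 < β) (hβ1 : β < 1) (hθ : 0 < θ)
    (hμ : μ ∈ Set.Ioo (0:ℝ) 1) (hγ : 0 ≤ γ) (hT : 0 < T)
    (y₀1 y₀2 : ℝ)
    (w1 w2 : ℝ → ℝ)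
    (hw1c : ContinuousOn w1 (Set.Icc 0 T)) (hw10 : w1 0 = 0)
    (hw2c : ContinuousOn w2 (Set.Icc 0 T)) (hw20 : w2 0 = 0)
    (y1 y2 : ℝ → ℝ)
    (hy1c : ContinuousOn y1 (Set.Icc 0 T))
    (hy1m : ∀ t ∈ Set.Icc (0:ℝ) T, y1 t ∈ Set.Ioo 0 (F1 β 1))
    (hy1e : ∀ t ∈ Set.Icc (0:ℝ) T,
      y1 t = y₀1 + (∫ s in (0:ℝ)..t, G β θ μ (F1inv β (y1 s))) + γ * θ ^ β * w1 t)
    (hy2c : ContinuousOn y2 (Set.Icc 0 T))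
    (hy2m : ∀ t ∈ Set.Icc (0:ℝ) T, y2 t ∈ Set.Ioo 0 (F1 β 1))
    (hy2e : ∀ t ∈ Set.Icc (0:ℝ) T,
      y2 t = y₀2 + (∫ s in (0:ℝ)..t, G β θ μ (F1inv β (y2 s))) + γ * θ ^ β * w2 t) :
    ∀ t ∈ Set.Icc (0:ℝ) T,
      y1 t - y2 t ≤ |y₀1 - y₀2| +
        2 * γ * θ ^ β * sSup ((fun s => |w1 s - w2 s|) '' Set.Icc 0 T) := by
  set M := sSup ((fun s => |w1 s - w2 s|) '' Set.Icc 0 T) with hM_def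
  have hbdd : BddAbove ((fun s => |w1 s - w2 s|) '' Set.Icc 0 T) :=
    (isCompact_Icc.image_of_continuousOn ((hw1c.sub hw2c).abs)).bddAbove
  have hMle : ∀ s ∈ Icc (0:ℝ) T, |w1 s - w2 s| ≤ M := fun s hs =>
    le_csSup hbdd (mem_image_of_mem _ hs)
  have hM0 : 0 ≤ M := by
    have := hMle 0 ⟨le_rfl, hT.le⟩
    rw [hw10, hw20] at this
    simpa using this
  have hθβ : 0 < θ ^ β := Real.rpow_pos_of_pos hθ β
  have hA0 : 0 ≤ γ * θ ^ β := mul_nonneg hγ hθβ.le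
  have h0T : (0:ℝ) ∈ Icc (0:ℝ) T := ⟨le_rfl, hT.le⟩
  have hD0 : y1 0 - y2 0 = y₀1 - y₀2 := by
    have h1 := hy1e 0 h0T
    have h2 := hy2e 0 h0T
    rw [integral_same, hw10] at h1
    rw [integral_same, hw20] at h2
    rw [h1, h2]; ring
  intro t ht
  set c := |y₀1 - y₀2| with hc_def
  have hc0 : 0 ≤ c := abs_nonneg _
  set S := Icc 0 t ∩ (fun u => y1 u - y2 u) ⁻¹' Iic c with hS_def
  have hsubT : Icc (0:ℝ) t ⊆ Icc 0 T := Icc_subset_Icc le_rfl ht.2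
  have hS0 : (0:ℝ) ∈ S := by
    refine ⟨⟨le_rfl, ht.1⟩, ?_⟩
    simp only [mem_preimage, mem_Iic, hD0]
    exact le_abs_self _
  have hScl : IsClosed S :=
    ((hy1c.sub hy2c).mono hsubT).preimage_isClosed_of_isClosed isClosed_Icc isClosed_Iic
  have hSbdd : BddAbove S := BddAbove.mono inter_subset_left bddAbove_Icc
  set s0 := sSup S with hs0_def
  have hs0S : s0 ∈ S := hScl.csSup_mem ⟨0, hS0⟩ hSbdd
  have hs0t : s0 ≤ t := hs0S.1.2
  have hs0T : s0 ∈ Icc (0:ℝ) T := hsubT hs0S.1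
  have hDs0 : y1 s0 - y2 s0 ≤ c := hs0S.2
  rcases eq_or_lt_of_le hs0t with heq | hlt
  · have := hDs0
    rw [heq] at this
    nlinarith
  · have hgt : ∀ u ∈ Ioc s0 t, c < y1 u - y2 u := by
      intro u hu
      by_contra hcon
      push_neg at hcon
      have huS : u ∈ S := ⟨⟨le_trans hs0S.1.1 hu.1.le, hu.2⟩, hcon⟩
      exact absurd (le_csSup hSbdd huS) (not_le.mpr hu.1)
    -- integrability
    have hi1a : IntervalIntegrable (fun s => G β θ μ (F1inv β (y1 s))) volume 0 s0 :=
      sol_integrable hβ0 hβ1 hT hy1c hy1m h0T hs0T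
    have hi1b : IntervalIntegrable (fun s => G β θ μ (F1inv β (y1 s))) volume s0 t :=
      sol_integrable hβ0 hβ1 hT hy1c hy1m hs0T ht
    have hi2a : IntervalIntegrable (fun s => G β θ μ (F1inv β (y2 s))) volume 0 s0 :=
      sol_integrable hβ0 hβ1 hT hy2c hy2m h0T hs0T
    have hi2b : IntervalIntegrable (fun s => G β θ μ (F1inv β (y2 s))) volume s0 t :=
      sol_integrable hβ0 hβ1 hT hy2c hy2m hs0T ht
    have hsplit1 : (∫ s in (0:ℝ)..t, G β θ μ (F1inv β (y1 s)))
        = (∫ s in (0:ℝ)..s0, G β θ μ (F1inv β (y1 s)))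
          + ∫ s in s0..t, G β θ μ (F1inv β (y1 s)) :=
      (integral_add_adjacent_intervals hi1a hi1b).symm
    have hsplit2 : (∫ s in (0:ℝ)..t, G β θ μ (F1inv β (y2 s)))
        = (∫ s in (0:ℝ)..s0, G β θ μ (F1inv β (y2 s)))
          + ∫ s in s0..t, G β θ μ (F1inv β (y2 s)) :=
      (integral_add_adjacent_intervals hi2a hi2b).symm
    have hmono : (∫ s in s0..t, G β θ μ (F1inv β (y1 s)))
        ≤ ∫ s in s0..t, G β θ μ (F1inv β (y2 s)) := by
      rw [integral_of_le hlt.le, integral_of_le hlt.le]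
      apply setIntegral_mono_on
      · rw [intervalIntegrable_iff, uIoc_of_le hlt.le] at hi1b
        exact hi1b
      · rw [intervalIntegrable_iff, uIoc_of_le hlt.le] at hi2b
        exact hi2b
      · exact measurableSet_Ioc
      · intro u hu
        have huT : u ∈ Icc (0:ℝ) T := hsubT ⟨le_trans hs0S.1.1 hu.1.le, hu.2⟩
        have hDu := hgt u hu
        have hyle : y2 u ≤ y1 u := by linarith
        have h1m := hy1m u huT
        have h2m := hy2m u huT
        have hx2 : F1inv β (y2 u) ∈ Ioo (0:ℝ) 1 := F1inv_mem_Ioo hβ0 hβ1 h2m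
        have hx1 : F1inv β (y1 u) ∈ Ioo (0:ℝ) 1 := F1inv_mem_Ioo hβ0 hβ1 h1m
        have hxle : F1inv β (y2 u) ≤ F1inv β (y1 u) :=
          F1inv_mono hβ0 hβ1 ⟨h2m.1.le, h2m.2.le⟩ ⟨h1m.1.le, h1m.2.le⟩ hyle
        exact G_antitoneOn hβ0 hβ1 hθ hμ.1 hμ.2 hx2 hx1 hxle
    have e1t := hy1e t ht
    have e2t := hy2e t ht
    have e1s := hy1e s0 hs0T
    have e2s := hy2e s0 hs0T
    have hwt : w1 t - w2 t ≤ M := le_trans (le_abs_self _) (hMle t ht)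
    have hws : -(w1 s0 - w2 s0) ≤ M := le_trans (neg_le_abs _) (hMle s0 hs0T)
    have hmul : γ * θ ^ β * ((w1 t - w2 t) - (w1 s0 - w2 s0)) ≤ γ * θ ^ β * (M + M) := by
      apply mul_le_mul_of_nonneg_left _ hA0
      linarith
    rw [e1t, e2t, hsplit1, hsplit2]
    rw [e1s, e2s] at hDs0
    nlinarith [hmul, hmono, hDs0]

theorem stmt10 (α β θ μ γ T : ℝ) (hα : α ∈ Set.Ioc (0:ℝ) 1)
    (hβ : β ∈ Set.Ioo (1 - α) 1) (hθ : 0 < θ) (hμ : μ ∈ Set.Ioo (0:ℝ) 1)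
    (hγ : 0 ≤ γ) (hT : 0 < T)
    (y₀1 y₀2 : ℝ) (hy₀1 : y₀1 ∈ Set.Ioo 0 (F1 β 1)) (hy₀2 : y₀2 ∈ Set.Ioo 0 (F1 β 1))
    (w1 w2 : ℝ → ℝ)
    (hw1c : ContinuousOn w1 (Set.Icc 0 T)) (hw10 : w1 0 = 0)
    (hw2c : ContinuousOn w2 (Set.Icc 0 T)) (hw20 : w2 0 = 0)
    (y1 y2 : ℝ → ℝ)
    (hy1c : ContinuousOn y1 (Set.Icc 0 T))
    (hy1m : ∀ t ∈ Set.Icc (0:ℝ) T, y1 t ∈ Set.Ioo 0 (F1 β 1))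
    (hy1e : ∀ t ∈ Set.Icc (0:ℝ) T,
      y1 t = y₀1 + (∫ s in (0:ℝ)..t, G β θ μ (F1inv β (y1 s))) + γ * θ ^ β * w1 t)
    (hy2c : ContinuousOn y2 (Set.Icc 0 T))
    (hy2m : ∀ t ∈ Set.Icc (0:ℝ) T, y2 t ∈ Set.Ioo 0 (F1 β 1))
    (hy2e : ∀ t ∈ Set.Icc (0:ℝ) T,
      y2 t = y₀2 + (∫ s in (0:ℝ)..t, G β θ μ (F1inv β (y2 s))) + γ * θ ^ β * w2 t) :
    ∀ t ∈ Set.Icc (0:ℝ) T,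
      |y1 t - y2 t| ≤ |y₀1 - y₀2| +
        2 * γ * θ ^ β * sSup ((fun s => |w1 s - w2 s|) '' Set.Icc 0 T) := by
  have hβ0 : 0 < β := by
    have := hβ.1; have := hα.2; linarith
  have hβ1 : β < 1 := hβ.2
  intro t ht
  rw [abs_sub_le_iff]
  constructor
  · exact one_side β θ μ γ T hβ0 hβ1 hθ hμ hγ hT y₀1 y₀2 w1 w2 hw1c hw10 hw2c hw20
      y1 y2 hy1c hy1m hy1e hy2c hy2m hy2e t ht
  · have himg : (fun s => |w2 s - w1 s|) '' Set.Icc 0 T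
        = (fun s => |w1 s - w2 s|) '' Set.Icc 0 T := by
      apply Set.image_congr
      intro s _
      exact abs_sub_comm _ _
    have := one_side β θ μ γ T hβ0 hβ1 hθ hμ hγ hT y₀2 y₀1 w2 w1 hw2c hw20 hw1c hw10
      y2 y1 hy2c hy2m hy2e hy1c hy1m hy1e t ht
    rw [himg, abs_sub_comm y₀2 y₀1] at this
    exact this
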